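/- Let f : ℝⁿ → ℝ be the quadratic function f(x) = (1/2)xᵀHx + bᵀx + c with diagonal positive-definite Hessian H = diag(λ₁, …, λₙ), λᵢ > 0 for all i. Then the largest constant μ₁ such that f(y) ≥ f(x) + ⟨∇f(x), y − x⟩ + (μ₁/2)‖y − x‖₁² for all x, y ∈ ℝⁿ is μ₁ = (Σᵢ 1/λᵢ)⁻¹. Equivalently, min over z ∈ ℝⁿ with ‖z‖₁ = 1 of zᵀHz equals (Σᵢ 1/λᵢ)⁻¹. -/

import Mathlib

open scoped RealInnerProductSpace

/-- for a separable quadratic with diagonal positive-definite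
Hessian `diag(λ₁,…,λₙ)`, the largest 1-norm strong-convexity constant is the
inverse of `∑ᵢ 1/λᵢ`; equivalently `min_{‖z‖₁=1} zᵀHz = (∑ᵢ 1/λᵢ)⁻¹`. -/
theorem separable_quadratic_one_norm_constant {n : ℕ} (hn : 0 < n)
    (lam : Fin n → ℝ) (hlam : ∀ i, 0 < lam i)
    (b : Fin n → ℝ) (c : ℝ)
    (f : EuclideanSpace ℝ (Fin n) → ℝ)
    (hfdef : ∀ x, f x = (1 / 2) * ∑ i, lam i * (x i) ^ 2 + ∑ i, b i * x i + c)
    (f' : EuclideanSpace ℝ (Fin n) → EuclideanSpace ℝ (Fin n))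
    (hf'def : ∀ x i, f' x i = lam i * x i + b i) :
    IsGreatest {μ₁ : ℝ | ∀ x y,
        f y ≥ f x + ⟪f' x, y - x⟫ + μ₁ / 2 * (∑ i, |y i - x i|) ^ 2}
      ((∑ i, (lam i)⁻¹)⁻¹) ∧
    IsLeast {v : ℝ | ∃ z : EuclideanSpace ℝ (Fin n),
        (∑ i, |z i|) = 1 ∧ v = ∑ i, lam i * (z i) ^ 2}
      ((∑ i, (lam i)⁻¹)⁻¹) := by
  set S : ℝ := ∑ i, (lam i)⁻¹ with hSdef
  have hne : (Finset.univ : Finset (Fin n)).Nonempty := by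
    simpa [Finset.univ_nonempty_iff] using Fin.pos_iff_nonempty.mp hn
  have hS : 0 < S := Finset.sum_pos (fun i _ => inv_pos.2 (hlam i)) hne
  -- Cauchy-Schwarz: (∑ |z i|)^2 ≤ S * ∑ lam i * z i ^ 2
  have cs : ∀ z : Fin n → ℝ, (∑ i, |z i|) ^ 2 ≤ S * ∑ i, lam i * (z i) ^ 2 := by
    intro z
    refine Finset.sum_sq_le_sum_mul_sum_of_sq_eq_mul _
      (fun i _ => (inv_pos.2 (hlam i)).le)
      (fun i _ => mul_nonneg (hlam i).le (sq_nonneg _)) (fun i _ => ?_)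
    rw [sq_abs]
    have hne0 := (hlam i).ne'
    field_simp
  -- key identity for the Bregman gap
  have key : ∀ x y : EuclideanSpace ℝ (Fin n),
      f y - f x - ⟪f' x, y - x⟫ = (1 / 2) * ∑ i, lam i * (y i - x i) ^ 2 := by
    intro x y
    have hin : ⟪f' x, y - x⟫ = ∑ i, (lam i * x i + b i) * (y i - x i) := by
      rw [PiLp.inner_apply]
      simp [hf'def, RCLike.inner_apply]
      exact Finset.sum_congr rfl fun i _ => mul_comm _ _
    rw [hfdef, hfdef, hin]
    rw [Finset.mul_sum, Finset.mul_sum, Finset.mul_sum]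
    rw [show ∀ A B C D E : ℝ, (A + B + c) - (C + D + c) - E = ((A - C) + (B - D)) - E
        from fun _ _ _ _ _ => by ring]
    rw [← Finset.sum_sub_distrib, ← Finset.sum_sub_distrib, ← Finset.sum_add_distrib,
      ← Finset.sum_sub_distrib]
    exact Finset.sum_congr rfl fun i _ => by ring
  -- the minimizer z0
  set z0 : EuclideanSpace ℝ (Fin n) := WithLp.toLp 2 (fun i => (lam i)⁻¹ / S) with hz0
  have hz0sum : (∑ i, |z0 i|) = 1 := by
    have : ∀ i, |z0 i| = (lam i)⁻¹ / S := fun i =>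
      abs_of_nonneg (div_nonneg (inv_pos.2 (hlam i)).le hS.le)
    simp only [this, ← Finset.sum_div]
    exact div_self hS.ne'
  have hz0q : (∑ i, lam i * (z0 i) ^ 2) = S⁻¹ := by
    have : ∀ i, lam i * (z0 i) ^ 2 = (lam i)⁻¹ / S ^ 2 := by
      intro i
      have := (hlam i).ne'
      change lam i * ((lam i)⁻¹ / S) ^ 2 = (lam i)⁻¹ / S ^ 2
      field_simp [hz0]
    simp only [this, ← Finset.sum_div, ← hSdef]
    rw [sq]
    field_simp
  constructor
  · constructor
    · -- membership: S⁻¹ is a valid strong convexity constant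
      intro x y
      have h1 := cs (fun i => y i - x i)
      have h2 : S⁻¹ / 2 * (∑ i, |y i - x i|) ^ 2 ≤ (1/2) * ∑ i, lam i * (y i - x i) ^ 2 := by
        have h3 := mul_le_mul_of_nonneg_left h1 (inv_pos.2 hS).le
        have e : S⁻¹ * (S * ∑ i, lam i * (y i - x i) ^ 2) = ∑ i, lam i * (y i - x i) ^ 2 := by
          rw [← mul_assoc, inv_mul_cancel₀ hS.ne', one_mul]
        rw [e] at h3
        linarith
      have := key x y
      linarith
    · -- upper bound
      intro μ hμ
      have h := hμ 0 z0
      have hk := key 0 z0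
      simp only [sub_zero, zero_sub] at h hk
      have hz0' : ∀ i, z0 i - (0 : EuclideanSpace ℝ (Fin n)) i = z0 i := by
        intro i; simp
      rw [show (∑ i, |z0 i - (0 : EuclideanSpace ℝ (Fin n)) i|) = ∑ i, |z0 i| from
        Finset.sum_congr rfl fun i _ => by rw [hz0' i]] at h
      rw [hz0sum] at h
      have hk' : f z0 - f 0 - ⟪f' 0, z0 - 0⟫ = (1/2) * S⁻¹ := by
        rw [key 0 z0]
        congr 1
        rw [← hz0q]
        exact Finset.sum_congr rfl fun i _ => by rw [hz0' i]
      rw [sub_zero] at hk'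
      have : μ / 2 * 1 ^ 2 ≤ (1/2) * S⁻¹ := by linarith [hk', h]
      nlinarith
  · constructor
    · exact ⟨z0, hz0sum, hz0q.symm⟩
    · rintro v ⟨z, hz1, rfl⟩
      have h := cs z
      rw [hz1, one_pow] at h
      have : (1 : ℝ) / S ≤ ∑ i, lam i * (z i) ^ 2 :=
        (div_le_iff₀ hS).2 (by linarith)
      rw [one_div] at this
      exact this
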